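/- arXiv:1301.3707 — 2 statements merged into one kernel-verified Lean document; each statement's English description precedes it below -/
import Mathlib

section
/- Let (X,S) be a non-degenerate symmetric solution satisfying Property (C). Then every element a of M(X,S) can be written a = a₁·a₂ where a₁ belongs to the submonoid generated by the frozen elements and a₂ is a divisor of the Garside element Δ. -/
/-- The defining relations of the structure monoid: `x y = g_x(y) f_y(x)`. -/
def structRel {X : Type*} (g f : X → X → X) :
    FreeMonoid X → FreeMonoid X → Prop :=
  fun a b => ∃ x y : X, a = FreeMonoid.of x * FreeMonoid.of y ∧
    b = FreeMonoid.of (g x y) * FreeMonoid.of (f y x)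

/-- `S` acting on the first two components of `X³`. -/
def S12 {X : Type*} (S : X × X → X × X) : X × X × X → X × X × X :=
  fun p => ((S (p.1, p.2.1)).1, (S (p.1, p.2.1)).2, p.2.2)

/-- `S` acting on the last two components of `X³`. -/
def S23 {X : Type*} (S : X × X → X × X) : X × X × X → X × X × X :=
  fun p => (p.1, (S (p.2.1, p.2.2)).1, (S (p.2.1, p.2.2)).2)

/-- The braid relation `S¹²S²³S¹² = S²³S¹²S²³`. -/
def Braided {X : Type*} (S : X × X → X × X) : Prop :=
  S12 S ∘ S23 S ∘ S12 S = S23 S ∘ S12 S ∘ S23 S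

/-- Property (C): for every frozen pair `(x,y)` (i.e. `S(x,y) = (x,y)`), one has
`g_x ∘ g_y = id` and `f_y ∘ f_x = id`. -/
def PropertyC {X : Type*} (S : X × X → X × X) (g f : X → X → X) : Prop :=
  ∀ x y : X, S (x, y) = (x, y) →
    (∀ z : X, g x (g y z) = z) ∧ (∀ z : X, f y (f x z) = z)

namespace Stmt18Aux

/-- The monoid `ℕ^X ⋊ Perm X` receiving the `I`-structure homomorphism. -/
@[ext] structure Pm (X : Type*) where
  v : X → ℕ
  p : Equiv.Perm X

variable {X : Type*}

instance : Mul (Pm X) := ⟨fun a b => ⟨fun t => a.v t + b.v (a.p⁻¹ t), a.p * b.p⟩⟩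
instance : One (Pm X) := ⟨⟨fun _ => 0, 1⟩⟩

@[simp] lemma mul_v (a b : Pm X) : (a * b).v = fun t => a.v t + b.v (a.p⁻¹ t) := rfl
@[simp] lemma mul_p (a b : Pm X) : (a * b).p = a.p * b.p := rfl
@[simp] lemma one_v : (1 : Pm X).v = fun _ => 0 := rfl
@[simp] lemma one_p : (1 : Pm X).p = 1 := rfl

instance : Monoid (Pm X) where
  mul_assoc a b c := by
    refine Pm.ext (funext fun t => ?_) (mul_assoc _ _ _)
    simp [mul_inv_rev, Equiv.Perm.mul_apply, add_assoc]
  one_mul a := Pm.ext (funext fun t => by simp) (one_mul _)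
  mul_one a := Pm.ext (funext fun t => by simp) (mul_one _)

section Main

variable [Fintype X] [DecidableEq X]
variable (g f : X → X → X) (hg : ∀ x : X, Function.Bijective (g x))
  (hid : ∀ x y : X, g (g x y) (f y x) = x)
  (hco : ∀ x y z : X, g (g x y) (g (f y x) z) = g x (g y z))

/-- The permutation `g x` of `X`. -/
noncomputable def sig (x : X) : Equiv.Perm X := Equiv.ofBijective (g x) (hg x)

@[simp] lemma sig_apply (x t : X) : sig g hg x t = g x t := rfl

/-- basis vector -/
def eb (x : X) : X → ℕ := fun t => if t = x then 1 else 0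

lemma eb_comp_inv (x y t : X) : eb y ((sig g hg x)⁻¹ t) = eb (g x y) t := by
  have : (sig g hg x)⁻¹ t = y ↔ t = g x y := by
    rw [Equiv.Perm.inv_def, Equiv.symm_apply_eq]; exact Iff.rfl
  simp only [eb]
  exact if_congr this rfl rfl

/-- The defining relation in the presented monoid. -/
lemma rel_mk (x y : X) :
    (PresentedMonoid.of (structRel g f) x) * PresentedMonoid.of (structRel g f) y =
      PresentedMonoid.of (structRel g f) (g x y) * PresentedMonoid.of (structRel g f) (f y x) := by
  have : PresentedMonoid.mk (structRel g f) (FreeMonoid.of x * FreeMonoid.of y) =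
      PresentedMonoid.mk (structRel g f) (FreeMonoid.of (g x y) * FreeMonoid.of (f y x)) :=
    Quotient.sound (ConGen.Rel.of _ _ ⟨x, y, rfl, rfl⟩)
  simpa [map_mul, PresentedMonoid.of] using this

/-- The `I`-structure homomorphism. -/
noncomputable def phi : PresentedMonoid (structRel g f) →* Pm X :=
  PresentedMonoid.lift (fun x => ⟨eb x, sig g hg x⟩) (by
    rintro a b ⟨x, y, rfl, rfl⟩
    simp only [map_mul, FreeMonoid.lift_eval_of]
    refine Pm.ext (funext fun t => ?_) ?_
    · show eb x t + eb y ((sig g hg x)⁻¹ t) =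
        eb (g x y) t + eb (f y x) ((sig g hg (g x y))⁻¹ t)
      rw [eb_comp_inv, eb_comp_inv, hid]
      exact add_comm _ _
    · show sig g hg x * sig g hg y = sig g hg (g x y) * sig g hg (f y x)
      ext t
      simp only [Equiv.Perm.mul_apply, sig_apply]
      exact (hco x y t).symm)

@[simp] lemma phi_of (x : X) :
    phi g f hg hid hco (PresentedMonoid.of (structRel g f) x) = ⟨eb x, sig g hg x⟩ := rfl

@[simp] lemma phi_mk_of (x : X) :
    phi g f hg hid hco (PresentedMonoid.mk (structRel g f) (FreeMonoid.of x)) =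
      ⟨eb x, sig g hg x⟩ := rfl

lemma head_dvd_list (l : List X) :
    ∀ z : X, 1 ≤ (phi g f hg hid hco (PresentedMonoid.mk (structRel g f)
        (FreeMonoid.ofList l))).v z →
      ∃ b, PresentedMonoid.mk (structRel g f) (FreeMonoid.ofList l) =
        PresentedMonoid.of (structRel g f) z * b := by
  induction l with
  | nil =>
    intro z hz
    exfalso
    have : FreeMonoid.ofList ([] : List X) = 1 := rfl
    rw [this, map_one, map_one] at hz
    simp at hz
  | cons x l ih =>
    intro z hz
    rw [FreeMonoid.ofList_cons, map_mul] at hz ⊢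
    rcases eq_or_ne z x with rfl | hzx
    · exact ⟨_, rfl⟩
    · have h1 : 1 ≤ (phi g f hg hid hco (PresentedMonoid.mk (structRel g f)
          (FreeMonoid.ofList l))).v ((sig g hg x)⁻¹ z) := by
        rw [map_mul] at hz
        simpa [eb, hzx] using hz
      obtain ⟨b, hb⟩ := ih _ h1
      set w := (sig g hg x)⁻¹ z with hw
      refine ⟨PresentedMonoid.of (structRel g f) (f w x) * b, ?_⟩
      rw [hb]
      have hgw : g x w = z := by
        have h2 : sig g hg x ((sig g hg x)⁻¹ z) = z := Equiv.apply_symm_apply (sig g hg x) z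
        rw [← hw] at h2
        exact h2
      calc PresentedMonoid.mk (structRel g f) (FreeMonoid.of x) *
            (PresentedMonoid.of (structRel g f) w * b)
          = (PresentedMonoid.of (structRel g f) x * PresentedMonoid.of (structRel g f) w) * b := by
            rw [mul_assoc]; rfl
        _ = (PresentedMonoid.of (structRel g f) z * PresentedMonoid.of (structRel g f) (f w x)) * b := by
            rw [rel_mk g f, hgw]
        _ = PresentedMonoid.of (structRel g f) z * (PresentedMonoid.of (structRel g f) (f w x) * b) := by
            rw [mul_assoc]

lemma head_dvd (a : PresentedMonoid (structRel g f)) (z : X)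
    (hz : 1 ≤ (phi g f hg hid hco a).v z) :
    ∃ b, a = PresentedMonoid.of (structRel g f) z * b := by
  obtain ⟨w, rfl⟩ := PresentedMonoid.surjective_mk a
  have h := head_dvd_list g f hg hid hco w.toList z
  rw [FreeMonoid.ofList_toList] at h
  exact h hz

lemma sum_v_mul (a b : PresentedMonoid (structRel g f)) :
    ∑ t, (phi g f hg hid hco (a * b)).v t =
      (∑ t, (phi g f hg hid hco a).v t) + ∑ t, (phi g f hg hid hco b).v t := by
  rw [map_mul, mul_v, Finset.sum_add_distrib]
  congr 1
  exact Equiv.sum_comp ((phi g f hg hid hco a).p⁻¹) ((phi g f hg hid hco b).v)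

lemma sum_v_of (x : X) :
    ∑ t, (phi g f hg hid hco (PresentedMonoid.of (structRel g f) x)).v t = 1 := by
  simp [eb, Finset.sum_ite_eq']

lemma eq_one_of_v_zero (a : PresentedMonoid (structRel g f))
    (h : ∀ t, (phi g f hg hid hco a).v t = 0) : a = 1 := by
  obtain ⟨w, rfl⟩ := PresentedMonoid.surjective_mk a
  rcases hl : w.toList with _ | ⟨x, l⟩
  · have hw : w = 1 := by
      have := congrArg FreeMonoid.ofList hl
      rwa [FreeMonoid.ofList_toList] at this
    rw [hw, map_one]
  · exfalso
    have hw : w = FreeMonoid.of x * FreeMonoid.ofList l := by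
      have := congrArg FreeMonoid.ofList hl
      rwa [FreeMonoid.ofList_toList, FreeMonoid.ofList_cons] at this
    have := h x
    rw [hw, map_mul, map_mul] at this
    simp [eb] at this

lemma phi_v_inj : ∀ (n : ℕ) (a b : PresentedMonoid (structRel g f)),
    (∑ t, (phi g f hg hid hco a).v t) = n →
    (phi g f hg hid hco a).v = (phi g f hg hid hco b).v → a = b := by
  intro n
  induction n with
  | zero =>
    intro a b ha hab
    have h0 : ∀ t, (phi g f hg hid hco a).v t = 0 := by
      intro t
      exact (Finset.sum_eq_zero_iff.mp ha) t (Finset.mem_univ t)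
    have h0' : ∀ t, (phi g f hg hid hco b).v t = 0 := fun t => by
      rw [← hab]; exact h0 t
    rw [eq_one_of_v_zero g f hg hid hco a h0, eq_one_of_v_zero g f hg hid hco b h0']
  | succ n ih =>
    intro a b ha hab
    obtain ⟨x, _, hx⟩ : ∃ x ∈ Finset.univ, (phi g f hg hid hco a).v x ≠ 0 :=
      Finset.exists_ne_zero_of_sum_ne_zero (by rw [ha]; exact Nat.succ_ne_zero n)
    have hx1 : 1 ≤ (phi g f hg hid hco a).v x := Nat.one_le_iff_ne_zero.mpr hx
    obtain ⟨a₀, rfl⟩ := head_dvd g f hg hid hco a x hx1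
    have hx1' : 1 ≤ (phi g f hg hid hco b).v x := by rw [← hab]; exact hx1
    obtain ⟨b₀, rfl⟩ := head_dvd g f hg hid hco b x hx1'
    have hv : (phi g f hg hid hco a₀).v = (phi g f hg hid hco b₀).v := by
      funext s
      have := congrFun hab ((sig g hg x) s)
      simp only [map_mul, mul_v, phi_of, Equiv.Perm.inv_def, Equiv.symm_apply_apply] at this
      omega
    have hs : ∑ t, (phi g f hg hid hco a₀).v t = n := by
      rw [sum_v_mul, sum_v_of] at ha
      omega
    rw [ih a₀ b₀ hs hv]

lemma phi_v_surj : ∀ (n : ℕ) (vv : X → ℕ), (∑ t, vv t) = n →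
    ∃ a : PresentedMonoid (structRel g f), (phi g f hg hid hco a).v = vv := by
  intro n
  induction n with
  | zero =>
    intro vv hv
    refine ⟨1, funext fun t => ?_⟩
    rw [map_one]
    have : vv t = 0 := (Finset.sum_eq_zero_iff.mp hv) t (Finset.mem_univ t)
    simp [this]
  | succ n ih =>
    intro vv hv
    obtain ⟨x, _, hx⟩ : ∃ x ∈ Finset.univ, vv x ≠ 0 :=
      Finset.exists_ne_zero_of_sum_ne_zero (by rw [hv]; exact Nat.succ_ne_zero n)
    have hx1 : 1 ≤ vv x := Nat.one_le_iff_ne_zero.mpr hx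
    have hebv : ∀ t, eb x t ≤ vv t := by
      intro t
      by_cases h : t = x
      · subst h; simpa [eb] using hx1
      · simp [eb, h]
    set w : X → ℕ := fun t => vv (sig g hg x t) - eb x (sig g hg x t) with hwdef
    have hkey : ∀ t, eb x t + w ((sig g hg x)⁻¹ t) = vv t := by
      intro t
      have h1 : sig g hg x ((sig g hg x)⁻¹ t) = t := Equiv.apply_symm_apply _ _
      simp only [hwdef, h1]
      have := hebv t
      omega
    have hsw : ∑ t, w t = n := by
      have h1 : ∑ t, (eb x t + w ((sig g hg x)⁻¹ t)) = ∑ t, vv t :=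
        Finset.sum_congr rfl fun t _ => hkey t
      rw [Finset.sum_add_distrib] at h1
      have h2 : ∑ t, w ((sig g hg x)⁻¹ t) = ∑ t, w t :=
        Equiv.sum_comp ((sig g hg x)⁻¹) w
      have h3 : ∑ t, eb x t = 1 := by simp [eb, Finset.sum_ite_eq']
      rw [h2, h3, hv] at h1
      omega
    obtain ⟨a₀, ha₀⟩ := ih w hsw
    refine ⟨PresentedMonoid.of (structRel g f) x * a₀, funext fun t => ?_⟩
    rw [map_mul, mul_v]
    simp only [phi_of, ha₀]
    exact hkey t

end Main

end Stmt18Aux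

section FinalTheorem

open Stmt18Aux

/-- under Property (C), every element `a` of `M(X,S)` decomposes as `a = a₁·a₂`
with `a₁` in the submonoid generated by the frozen elements and `a₂` a divisor of the Garside
element `Δ`. -/
theorem stmt_18 {X : Type*} [Fintype X]
    (S : X × X → X × X) (g f : X → X → X)
    (hS : ∀ x y : X, S (x, y) = (g x y, f y x))
    (hg : ∀ x : X, Function.Bijective (g x))
    (hf : ∀ x : X, Function.Bijective (f x))
    (hinv : ∀ p : X × X, S (S p) = p)
    (hbr : Braided S)
    (hC : PropertyC S g f)
    (yf : X → X) (hyf : ∀ x : X, S (x, yf x) = (x, yf x))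
    (Δ : PresentedMonoid (structRel g f))
    (hΔdvd : ∀ x : X, PresentedMonoid.of (structRel g f) x ∣ Δ)
    (hΔlcm : ∀ m : PresentedMonoid (structRel g f),
      (∀ x : X, PresentedMonoid.of (structRel g f) x ∣ m) → Δ ∣ m) :
    ∀ a : PresentedMonoid (structRel g f),
      ∃ a₁ a₂ : PresentedMonoid (structRel g f),
        a = a₁ * a₂ ∧
        a₁ ∈ Submonoid.closure (Set.range fun x : X =>
          PresentedMonoid.of (structRel g f) x * PresentedMonoid.of (structRel g f) (yf x)) ∧
        a₂ ∣ Δ := by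
  classical
  -- the two structural identities needed for the `I`-structure homomorphism
  have hid : ∀ x y : X, g (g x y) (f y x) = x := by
    intro x y
    have h := hinv (x, y)
    rw [hS x y, hS (g x y) (f y x)] at h
    exact (Prod.ext_iff.mp h).1
  have hco : ∀ x y z : X, g (g x y) (g (f y x) z) = g x (g y z) := by
    intro x y z
    have h := congrFun hbr (x, y, z)
    simp only [Function.comp_apply, S12, S23, hS] at h
    exact (Prod.ext_iff.mp h).1
  have hgyf : ∀ z : X, g z (yf z) = z := by
    intro z
    have h := hyf z
    rw [hS] at h
    exact (Prod.ext_iff.mp h).1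
  -- the value of φ on Δ is the all-ones vector
  have hΔone : ∀ t, ((phi g f hg hid hco) Δ).v t = 1 := by
    obtain ⟨D, hD⟩ := phi_v_surj g f hg hid hco (Fintype.card X) (fun _ => 1) (by simp)
    have hDall : ∀ x : X, PresentedMonoid.of (structRel g f) x ∣ D := by
      intro x
      obtain ⟨b, hb⟩ := head_dvd g f hg hid hco D x (by rw [hD])
      exact ⟨b, hb⟩
    obtain ⟨r, hr⟩ := hΔlcm D hDall
    have hge : ∀ t, 1 ≤ ((phi g f hg hid hco) Δ).v t := by
      intro t
      obtain ⟨c, hc⟩ := hΔdvd t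
      rw [hc, map_mul, Stmt18Aux.mul_v]
      simp [Stmt18Aux.eb]
    have hsum : (∑ t, ((phi g f hg hid hco) Δ).v t) +
        ∑ t, ((phi g f hg hid hco) r).v t = Fintype.card X := by
      have h1 := sum_v_mul g f hg hid hco Δ r
      rw [← hr, hD] at h1
      simpa using h1.symm
    have hle : Fintype.card X ≤ ∑ t, ((phi g f hg hid hco) Δ).v t := by
      calc Fintype.card X = ∑ _t : X, 1 := by simp
        _ ≤ ∑ t, ((phi g f hg hid hco) Δ).v t := Finset.sum_le_sum fun t _ => hge t
    intro t
    by_contra hne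
    have h2 : 2 ≤ ((phi g f hg hid hco) Δ).v t := by
      have := hge t; omega
    have h3 : (∑ _t : X, 1) < ∑ t, ((phi g f hg hid hco) Δ).v t := by
      refine Finset.sum_lt_sum (fun i _ => hge i) ⟨t, Finset.mem_univ t, by omega⟩
    simp only [Finset.sum_const, Finset.card_univ, smul_eq_mul, mul_one] at h3
    omega
  -- every element whose vector is ≤ 1 pointwise divides Δ
  have hdvdΔ : ∀ a : PresentedMonoid (structRel g f),
      (∀ t, ((phi g f hg hid hco) a).v t ≤ 1) → a ∣ Δ := by
    intro a ha
    obtain ⟨b, hb⟩ := phi_v_surj g f hg hid hco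
      (∑ t, (1 - ((phi g f hg hid hco) a).v (((phi g f hg hid hco) a).p t)))
      (fun t => 1 - ((phi g f hg hid hco) a).v (((phi g f hg hid hco) a).p t)) rfl
    have hv : ((phi g f hg hid hco) (a * b)).v = ((phi g f hg hid hco) Δ).v := by
      funext t
      rw [map_mul, Stmt18Aux.mul_v]
      simp only [hb]
      have h1 : ((phi g f hg hid hco) a).p (((phi g f hg hid hco) a).p⁻¹ t) = t :=
        Equiv.apply_symm_apply _ _
      rw [h1]
      have h2 := ha t
      have h3 := hΔone t
      omega
    have heq : a * b = Δ :=
      phi_v_inj g f hg hid hco (∑ t, ((phi g f hg hid hco) (a * b)).v t) (a * b) Δ rfl hv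
    exact ⟨b, heq.symm⟩
  -- extraction of a frozen prefix from an element with a coordinate ≥ 2
  have hextract : ∀ a : PresentedMonoid (structRel g f), ∀ z : X,
      2 ≤ ((phi g f hg hid hco) a).v z →
      ∃ c, a = (PresentedMonoid.of (structRel g f) z *
        PresentedMonoid.of (structRel g f) (yf z)) * c := by
    intro a z hz2
    obtain ⟨b, hb⟩ := head_dvd g f hg hid hco a z (by omega)
    have hyz : (sig g hg z)⁻¹ z = yf z := by
      rw [Equiv.Perm.inv_def, Equiv.symm_apply_eq]
      exact (hgyf z).symm
    have hb1 : 1 ≤ ((phi g f hg hid hco) b).v (yf z) := by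
      have h4 := hz2
      rw [hb, map_mul, Stmt18Aux.mul_v] at h4
      simp only [phi_of, hyz] at h4
      have he : Stmt18Aux.eb z z = 1 := by simp [Stmt18Aux.eb]
      omega
    obtain ⟨c, hc⟩ := head_dvd g f hg hid hco b (yf z) hb1
    refine ⟨c, ?_⟩
    rw [hb, hc, mul_assoc]
  -- main induction on the total degree
  have main : ∀ (n : ℕ) (a : PresentedMonoid (structRel g f)),
      (∑ t, ((phi g f hg hid hco) a).v t) = n →
      ∃ a₁ a₂ : PresentedMonoid (structRel g f),
        a = a₁ * a₂ ∧
        a₁ ∈ Submonoid.closure (Set.range fun x : X =>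
          PresentedMonoid.of (structRel g f) x * PresentedMonoid.of (structRel g f) (yf x)) ∧
        a₂ ∣ Δ := by
    intro n
    induction n using Nat.strong_induction_on with
    | _ n ih =>
      intro a hn
      by_cases hle : ∀ t, ((phi g f hg hid hco) a).v t ≤ 1
      · exact ⟨1, a, (one_mul a).symm, Submonoid.one_mem _, hdvdΔ a hle⟩
      · push_neg at hle
        obtain ⟨z, hz⟩ := hle
        have hz2 : 2 ≤ ((phi g f hg hid hco) a).v z := hz
        obtain ⟨c, hc⟩ := hextract a z hz2
        have hsc : ∑ t, ((phi g f hg hid hco) c).v t = n - 2 ∧ 2 ≤ n := by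
          have h1 := sum_v_mul g f hg hid hco
            (PresentedMonoid.of (structRel g f) z *
              PresentedMonoid.of (structRel g f) (yf z)) c
          have h2 := sum_v_mul g f hg hid hco
            (PresentedMonoid.of (structRel g f) z) (PresentedMonoid.of (structRel g f) (yf z))
          rw [← hc, hn] at h1
          rw [sum_v_of, sum_v_of] at h2
          omega
        obtain ⟨c₁, c₂, hceq, hc₁, hc₂⟩ := ih (n - 2) (by omega) c hsc.1
        refine ⟨(PresentedMonoid.of (structRel g f) z *
          PresentedMonoid.of (structRel g f) (yf z)) * c₁, c₂, ?_, ?_, hc₂⟩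
        · rw [hc, hceq]; exact (mul_assoc _ _ _).symm
        · exact Submonoid.mul_mem _ (Submonoid.subset_closure ⟨z, rfl⟩) hc₁
  intro a
  exact main (∑ t, ((phi g f hg hid hco) a).v t) a rfl

end FinalTheorem
end

section
/- Let (X,S) be a non-degenerate symmetric solution with |X| = n satisfying Property (C). Then the quotient group W(X,S) of G(X,S), obtained by adding the relations xy = 1 for each frozen pair (x,y) to the defining presentation of G(X,S), is a finite group of order 2^n, and the kernel of the projection G(X,S) → W(X,S) is free Abelian of rank n (generated by the frozen elements). -/
set_option linter.unusedSectionVars false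
set_option maxHeartbeats 1000000


/-- Relators of the structure group presentation `⟨X ∣ xy = g_x(y) f_y(x)⟩`. -/
def structGrpRels {X : Type*} (g f : X → X → X) : Set (FreeGroup X) :=
  {w | ∃ x y : X, w = FreeGroup.of x * FreeGroup.of y *
      (FreeGroup.of (g x y) * FreeGroup.of (f y x))⁻¹}

/-- Relators of the finite quotient `W(X,S)`: the structure group relators together with the
relators `xy` for every frozen pair `(x,y)`. -/
def quotRels {X : Type*} (S : X × X → X × X) (g f : X → X → X) : Set (FreeGroup X) :=
  structGrpRels g f ∪
    {w | ∃ x y : X, S (x, y) = (x, y) ∧ w = FreeGroup.of x * FreeGroup.of y}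

section YB

variable {X : Type*} {S : X × X → X × X} {g f : X → X → X}
  (hS : ∀ x y : X, S (x, y) = (g x y, f y x))
  (hinv : ∀ p : X × X, S (S p) = p)
  (hbr : Braided S)

include hS hinv in
lemma I1 (x y : X) : g (g x y) (f y x) = x := by
  have h := hinv (x, y)
  rw [hS, hS] at h
  exact congrArg Prod.fst h

include hS hinv in
lemma I2 (x y : X) : f (f y x) (g x y) = y := by
  have h := hinv (x, y)
  rw [hS, hS] at h
  exact congrArg Prod.snd h

include hS hbr in
lemma braid3 (x y z : X) :
    (g (g x y) (g (f y x) z), f (g (f y x) z) (g x y), f z (f y x))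
      = ((g x (g y z), g (f (g y z) x) (f z y), f (f z y) (f (g y z) x)) : X × X × X) := by
  have h := congrFun hbr (x, (y, z))
  simpa [S12, S23, hS, Function.comp] using h

include hS hbr in
lemma B1 (x y z : X) : g (g x y) (g (f y x) z) = g x (g y z) :=
  congrArg Prod.fst (braid3 hS hbr x y z)

include hS hbr in
lemma B2 (x y z : X) : f (g (f y x) z) (g x y) = g (f (g y z) x) (f z y) :=
  congrArg (fun p => p.2.1) (braid3 hS hbr x y z)

include hS hbr in
lemma B3 (x y z : X) : f z (f y x) = f (f z y) (f (g y z) x) :=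
  congrArg (fun p => p.2.2) (braid3 hS hbr x y z)

end YB


section YB

variable {X : Type*} {S : X × X → X × X} {g f : X → X → X}
  (hS : ∀ x y : X, S (x, y) = (g x y, f y x))
  (hg : ∀ x : X, Function.Bijective (g x))
  (hinv : ∀ p : X × X, S (S p) = p)
  (hbr : Braided S)
  (hC : PropertyC S g f)
  {yf : X → X} (hyf : ∀ x : X, S (x, yf x) = (x, yf x))



include hS hyf in
lemma gyf (x : X) : g x (yf x) = x := by
  have h := hyf x; rw [hS] at h
  exact congrArg Prod.fst h

include hS hyf in
lemma fyf (x : X) : f (yf x) x = yf x := by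
  have h := hyf x; rw [hS] at h
  exact congrArg Prod.snd h

include hS hg hyf in
lemma eq_yf_of_g {x y : X} (h : g x y = x) : y = yf x :=
  (hg x).1 (h.trans (gyf hS hyf x).symm)

include hS hg hyf in
lemma frozen_eq_yf {x y : X} (h : S (x, y) = (x, y)) : y = yf x := by
  rw [hS] at h
  exact eq_yf_of_g hS hg hyf (congrArg Prod.fst h)

include hS hg hbr hyf in
/-- F1 : `yf (g z x) = g (f x z) (yf x)`. -/
lemma yf_g (z x : X) : yf (g z x) = g (f x z) (yf x) := by
  refine (eq_yf_of_g hS hg hyf ?_).symm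
  have h := B1 hS hbr z x (yf x)
  rwa [gyf hS hyf x] at h

include hS hg hbr hyf in
/-- F2 : `yf (f (g (yf x) z) x) = f z (yf x)`. -/
lemma yf_f (z x : X) : yf (f (g (yf x) z) x) = f z (yf x) := by
  refine (eq_yf_of_g hS hg hyf ?_).symm
  have h := B2 hS hbr x (yf x) z
  rw [fyf hS hyf x, gyf hS hyf x] at h
  exact h.symm

include hC hyf in
lemma hC1 (x z : X) : g x (g (yf x) z) = z := (hC x (yf x) (hyf x)).1 z

include hC hyf in
lemma hC2 (x z : X) : f (yf x) (f x z) = z := (hC x (yf x) (hyf x)).2 z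

variable (g f yf) in
/-- `α z x` : the result of pushing the frozen block `θ x` to the right past generator `z`. -/
def alphaYB (z x : X) : X := f (g (yf x) z) x

include hS hg hbr hC hyf in
lemma alpha_inv (b a : X) : alphaYB g f yf (yf b) (alphaYB g f yf b a) = a := by
  unfold alphaYB
  rw [yf_f hS hg hbr hyf b a, ← yf_g hS hg hbr hyf (yf a) b]
  exact hC2 hC hyf (g (yf a) b) a

end YB


/-- Semidirect-product-like group `(X → A) ⋊ Perm X`. -/
@[ext]
structure SDP (X : Type*) (A : Type*) where
  a : X → A
  σ : Equiv.Perm X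

namespace SDP

variable {X : Type*} {A : Type*} [AddCommGroup A]

instance : Group (SDP X A) where
  mul p q := ⟨p.a + fun v => q.a (p.σ.symm v), p.σ * q.σ⟩
  one := ⟨0, 1⟩
  inv p := ⟨-fun v => p.a (p.σ v), p.σ⁻¹⟩
  mul_assoc p q r := by
    ext v
    · show (p.a + fun v => q.a (p.σ.symm v)) v + r.a ((p.σ * q.σ).symm v)
        = p.a v + ((q.a + fun v => r.a (q.σ.symm v)) (p.σ.symm v))
      simp [add_assoc, Equiv.Perm.mul_def]
    · show ((p.σ * q.σ) * r.σ) v = (p.σ * (q.σ * r.σ)) v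
      simp [mul_assoc]
  one_mul p := by
    ext v
    · show (0 : X → A) v + p.a ((1 : Equiv.Perm X).symm v) = p.a v
      simp
      rfl
    · show ((1 : Equiv.Perm X) * p.σ) v = p.σ v
      simp
  mul_one p := by
    ext v
    · show p.a v + (0 : X → A) (p.σ.symm v) = p.a v
      simp
    · show (p.σ * 1) v = p.σ v
      simp
  inv_mul_cancel p := by
    ext v
    · show (-fun v => p.a (p.σ v)) v + p.a ((p.σ⁻¹).symm v) = (0 : X → A) v
      show -p.a (p.σ v) + p.a ((Equiv.symm p.σ⁻¹) v) = 0
      have : (Equiv.symm p.σ⁻¹) v = p.σ v := rfl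
      rw [this]; simp
    · show (p.σ⁻¹ * p.σ) v = (1 : Equiv.Perm X) v
      simp

lemma mul_def (p q : SDP X A) :
    p * q = ⟨p.a + fun v => q.a (p.σ.symm v), p.σ * q.σ⟩ := rfl

lemma one_def : (1 : SDP X A) = ⟨0, 1⟩ := rfl

lemma inv_def (p : SDP X A) : p⁻¹ = ⟨-fun v => p.a (p.σ v), p.σ⁻¹⟩ := rfl

@[simp] lemma mul_a (p q : SDP X A) (v : X) :
    (p * q).a v = p.a v + q.a (p.σ.symm v) := rfl

@[simp] lemma mul_σ (p q : SDP X A) : (p * q).σ = p.σ * q.σ := rfl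

@[simp] lemma one_a (v : X) : (1 : SDP X A).a v = 0 := rfl

@[simp] lemma one_σ : (1 : SDP X A).σ = 1 := rfl

@[simp] lemma inv_a (p : SDP X A) (v : X) : (p⁻¹).a v = -p.a (p.σ v) := rfl

@[simp] lemma inv_σ (p : SDP X A) : (p⁻¹).σ = p.σ⁻¹ := rfl

end SDP

section Homs

variable {X : Type*} [DecidableEq X] {S : X × X → X × X} {g f : X → X → X} {yf : X → X}

/-- indicator function -/
def deltaF (A : Type*) [NonAssocRing A] (x : X) : X → A := fun v => if v = x then 1 else 0

noncomputable def gPerm (hg : ∀ x : X, Function.Bijective (g x)) (x : X) : Equiv.Perm X :=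
  Equiv.ofBijective (g x) (hg x)

@[simp] lemma gPerm_apply (hg : ∀ x : X, Function.Bijective (g x)) (x v : X) :
    gPerm hg x v = g x v := rfl

lemma gPerm_symm_iff (hg : ∀ x : X, Function.Bijective (g x)) (x v y : X) :
    (gPerm hg x).symm v = y ↔ v = g x y := by
  rw [Equiv.symm_apply_eq]; rfl

variable (hS : ∀ x y : X, S (x, y) = (g x y, f y x))
  (hg : ∀ x : X, Function.Bijective (g x))
  (hinv : ∀ p : X × X, S (S p) = p)
  (hbr : Braided S)
  (hC : PropertyC S g f)
  (hyf : ∀ x : X, S (x, yf x) = (x, yf x))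

section Ring
variable (A : Type*) [NonAssocRing A]

include hS hinv hbr in
lemma sdp_gen_rel (x y : X) :
    (⟨deltaF A x, gPerm hg x⟩ * ⟨deltaF A y, gPerm hg y⟩ : SDP X A)
      = ⟨deltaF A (g x y), gPerm hg (g x y)⟩ * ⟨deltaF A (f y x), gPerm hg (f y x)⟩ := by
  ext v
  · simp only [SDP.mul_a]
    have h1 : deltaF A y ((gPerm hg x).symm v) = deltaF A (g x y) v := by
      simp only [deltaF]
      congr 1
      rw [eq_iff_iff, gPerm_symm_iff]
    have h2 : deltaF A (f y x) ((gPerm hg (g x y)).symm v) = deltaF A x v := by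
      simp only [deltaF]
      congr 1
      rw [eq_iff_iff, gPerm_symm_iff, I1 hS hinv x y]
    rw [h1, h2, add_comm]
  · simp only [SDP.mul_σ, Equiv.Perm.mul_apply, gPerm_apply]
    exact (B1 hS hbr x y v).symm

include hC hyf in
lemma gPerm_yf_cancel (x : X) : gPerm hg x * gPerm hg (yf x) = 1 := by
  ext v
  simp only [Equiv.Perm.mul_apply, gPerm_apply, Equiv.Perm.coe_one, id_eq]
  exact hC1 hC hyf x v

include hS hg hyf in
lemma frozen_delta (A : Type*) [NonAssocRing A] (x v : X) :
    deltaF A (yf x) ((gPerm hg x).symm v) = deltaF A x v := by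
  simp only [deltaF]
  congr 1
  rw [eq_iff_iff, gPerm_symm_iff, gyf hS hyf x]

end Ring

/-- The homomorphism `G(X,S) → (X → ℤ) ⋊ Perm X`. -/
noncomputable def psiG : PresentedGroup (structGrpRels g f) →* SDP X ℤ :=
  PresentedGroup.toGroup (f := fun x => (⟨deltaF ℤ x, gPerm hg x⟩ : SDP X ℤ)) (by
    rintro r ⟨x, y, rfl⟩
    rw [map_mul, map_mul, map_inv, map_mul, mul_inv_eq_one]
    simp only [FreeGroup.lift_apply_of]
    exact sdp_gen_rel hS hg hinv hbr ℤ x y)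

@[simp] lemma psiG_of (x : X) :
    psiG hS hg hinv hbr (PresentedGroup.of x) = (⟨deltaF ℤ x, gPerm hg x⟩ : SDP X ℤ) :=
  PresentedGroup.toGroup.of _

/-- The homomorphism `W(X,S) → (X → ZMod 2) ⋊ Perm X`. -/
noncomputable def psiW : PresentedGroup (quotRels S g f) →* SDP X (ZMod 2) :=
  PresentedGroup.toGroup (f := fun x => (⟨deltaF (ZMod 2) x, gPerm hg x⟩ : SDP X (ZMod 2))) (by
    rintro r (⟨x, y, rfl⟩ | ⟨x, y, hfr, rfl⟩)
    · rw [map_mul, map_mul, map_inv, map_mul, mul_inv_eq_one]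
      simp only [FreeGroup.lift_apply_of]
      exact sdp_gen_rel hS hg hinv hbr (ZMod 2) x y
    · rw [map_mul]
      simp only [FreeGroup.lift_apply_of]
      obtain rfl := frozen_eq_yf hS hg hyf hfr
      ext v
      · simp only [SDP.mul_a, SDP.one_a]
        rw [frozen_delta hS hg hyf (ZMod 2) x v]
        have : ∀ a : ZMod 2, a + a = 0 := by decide
        exact this _
      · simp only [SDP.mul_σ, SDP.one_σ]
        rw [gPerm_yf_cancel hg hC hyf x])

@[simp] lemma psiW_of (x : X) :
    psiW hS hg hinv hbr hC hyf (PresentedGroup.of x)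
      = (⟨deltaF (ZMod 2) x, gPerm hg x⟩ : SDP X (ZMod 2)) :=
  PresentedGroup.toGroup.of _

end Homs

section Rels

variable {X : Type*} [DecidableEq X] {S : X × X → X × X} {g f : X → X → X} {yf : X → X}
  (hS : ∀ x y : X, S (x, y) = (g x y, f y x))
  (hg : ∀ x : X, Function.Bijective (g x))
  (hinv : ∀ p : X × X, S (S p) = p)
  (hbr : Braided S)
  (hC : PropertyC S g f)
  (hyf : ∀ x : X, S (x, yf x) = (x, yf x))

variable (g f) in
lemma relG (x y : X) :
    (PresentedGroup.of x : PresentedGroup (structGrpRels g f)) * PresentedGroup.of y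
      = PresentedGroup.of (g x y) * PresentedGroup.of (f y x) := by
  have hr : (FreeGroup.of x * FreeGroup.of y
      * (FreeGroup.of (g x y) * FreeGroup.of (f y x))⁻¹) ∈ structGrpRels g f := ⟨x, y, rfl⟩
  have h1 : PresentedGroup.mk (structGrpRels g f) (FreeGroup.of x * FreeGroup.of y
      * (FreeGroup.of (g x y) * FreeGroup.of (f y x))⁻¹) = 1 :=
    (QuotientGroup.eq_one_iff _).mpr (Subgroup.subset_normalClosure hr)
  rw [map_mul, map_mul, map_inv, map_mul, mul_inv_eq_one] at h1
  exact h1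

variable (S g f) in
lemma relW (x y : X) :
    (PresentedGroup.of x : PresentedGroup (quotRels S g f)) * PresentedGroup.of y
      = PresentedGroup.of (g x y) * PresentedGroup.of (f y x) := by
  have hr : (FreeGroup.of x * FreeGroup.of y
      * (FreeGroup.of (g x y) * FreeGroup.of (f y x))⁻¹) ∈ quotRels S g f :=
    Or.inl ⟨x, y, rfl⟩
  have h1 : PresentedGroup.mk (quotRels S g f) (FreeGroup.of x * FreeGroup.of y
      * (FreeGroup.of (g x y) * FreeGroup.of (f y x))⁻¹) = 1 :=
    (QuotientGroup.eq_one_iff _).mpr (Subgroup.subset_normalClosure hr)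
  rw [map_mul, map_mul, map_inv, map_mul, mul_inv_eq_one] at h1
  exact h1

variable (S g f) in
include hyf in
lemma frozenW (x : X) :
    (PresentedGroup.of x : PresentedGroup (quotRels S g f)) * PresentedGroup.of (yf x) = 1 := by
  have hr : (FreeGroup.of x * FreeGroup.of (yf x)) ∈ quotRels S g f :=
    Or.inr ⟨x, yf x, hyf x, rfl⟩
  have h1 : PresentedGroup.mk (quotRels S g f) (FreeGroup.of x * FreeGroup.of (yf x)) = 1 :=
    (QuotientGroup.eq_one_iff _).mpr (Subgroup.subset_normalClosure hr)
  rw [map_mul] at h1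
  exact h1

variable (S g f) in
include hyf in
lemma inv_ofW (x : X) :
    (PresentedGroup.of x : PresentedGroup (quotRels S g f))⁻¹ = PresentedGroup.of (yf x) :=
  inv_eq_of_mul_eq_one_right (frozenW S g f hyf x)

variable (g f yf) in
/-- The frozen element `θ x = x ⬝ yf x` in the structure group. -/
def th (x : X) : PresentedGroup (structGrpRels g f) :=
  PresentedGroup.of x * PresentedGroup.of (yf x)

include hS hg hbr hC hyf in
lemma theta_push (z x : X) :
    th g f yf x * PresentedGroup.of z
      = PresentedGroup.of z * th g f yf (alphaYB g f yf z x) := by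
  unfold th alphaYB
  rw [yf_f hS hg hbr hyf z x]
  calc PresentedGroup.of x * PresentedGroup.of (yf x) * PresentedGroup.of z
      = PresentedGroup.of x * (PresentedGroup.of (yf x) * PresentedGroup.of z) := by
        rw [mul_assoc]
    _ = PresentedGroup.of x * (PresentedGroup.of (g (yf x) z)
          * PresentedGroup.of (f z (yf x))) := by rw [relG g f]
    _ = (PresentedGroup.of x * PresentedGroup.of (g (yf x) z))
          * PresentedGroup.of (f z (yf x)) := by rw [mul_assoc]
    _ = (PresentedGroup.of (g x (g (yf x) z)) * PresentedGroup.of (f (g (yf x) z) x))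
          * PresentedGroup.of (f z (yf x)) := by rw [relG g f]
    _ = PresentedGroup.of z * PresentedGroup.of (f (g (yf x) z) x)
          * PresentedGroup.of (f z (yf x)) := by rw [hC1 hC hyf x z]
    _ = PresentedGroup.of z * (PresentedGroup.of (f (g (yf x) z) x)
          * PresentedGroup.of (f z (yf x))) := by rw [mul_assoc]

include hS hg hinv hbr hC hyf in
lemma psiG_th (x : X) :
    psiG hS hg hinv hbr (th g f yf x)
      = (⟨fun v => 2 * deltaF ℤ x v, 1⟩ : SDP X ℤ) := by
  unfold th
  rw [map_mul, psiG_of, psiG_of]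
  ext v
  · simp only [SDP.mul_a]
    rw [frozen_delta hS hg hyf ℤ x v, two_mul]
  · simp only [SDP.mul_σ]
    rw [gPerm_yf_cancel hg hC hyf x]

include hS hg hinv hbr hC hyf in
lemma th_inj {x x' : X} (h : th g f yf x = th g f yf x') : x = x' := by
  have e : (⟨fun v => 2 * deltaF ℤ x v, 1⟩ : SDP X ℤ)
      = (⟨fun v => 2 * deltaF ℤ x' v, 1⟩ : SDP X ℤ) := by
    rw [← psiG_th hS hg hinv hbr hC hyf x, ← psiG_th hS hg hinv hbr hC hyf x', h]
  have h2 := congrFun (congrArg SDP.a e) x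
  simp only [deltaF] at h2
  by_contra hne
  rw [if_neg hne] at h2
  simp at h2

include hS hg hinv hbr hC hyf in
lemma alpha_bij (z : X) [Finite X] : Function.Bijective (alphaYB g f yf z) := by
  have hi : Function.Injective (alphaYB g f yf z) := by
    intro x1 x2 hx
    have : th g f yf x1 * PresentedGroup.of z = th g f yf x2 * PresentedGroup.of z := by
      rw [theta_push hS hg hbr hC hyf z x1, theta_push hS hg hbr hC hyf z x2, hx]
    exact th_inj hS hg hinv hbr hC hyf (mul_right_cancel this)
  exact ⟨hi, Finite.surjective_of_injective hi⟩

include hS hg hbr hC hyf in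
lemma th_comm (a b : X) : th g f yf a * th g f yf b = th g f yf b * th g f yf a := by
  calc th g f yf a * th g f yf b
      = (th g f yf a * PresentedGroup.of b) * PresentedGroup.of (yf b) := by
        simp only [th]; group
    _ = PresentedGroup.of b * (th g f yf (alphaYB g f yf b a) * PresentedGroup.of (yf b)) := by
        rw [theta_push hS hg hbr hC hyf b a, mul_assoc]
    _ = PresentedGroup.of b * (PresentedGroup.of (yf b)
          * th g f yf (alphaYB g f yf (yf b) (alphaYB g f yf b a))) := by
        rw [theta_push hS hg hbr hC hyf (yf b) (alphaYB g f yf b a)]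
    _ = th g f yf b * th g f yf a := by
        rw [alpha_inv hS hg hbr hC hyf b a]; simp only [th]; group

end Rels

section Wfinite

variable {X : Type*} [DecidableEq X] {S : X × X → X × X} {g f : X → X → X} {yf : X → X}
  (hS : ∀ x y : X, S (x, y) = (g x y, f y x))
  (hg : ∀ x : X, Function.Bijective (g x))
  (hinv : ∀ p : X × X, S (S p) = p)
  (hbr : Braided S)
  (hC : PropertyC S g f)
  (hyf : ∀ x : X, S (x, yf x) = (x, yf x))

variable (S g f) in
/-- product of a positive word in `W`. -/
def prodW (l : List X) : PresentedGroup (quotRels S g f) :=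
  (l.map PresentedGroup.of).prod

@[simp] lemma prodW_nil : prodW S g f ([] : List X) = 1 := rfl

@[simp] lemma prodW_cons (a : X) (l : List X) :
    prodW S g f (a :: l) = PresentedGroup.of a * prodW S g f l := by
  simp [prodW]

/-- the list of "left coordinates" of a positive word. -/
def zlist (gP : X → Equiv.Perm X) : List X → List X
  | [] => []
  | a :: t => a :: (zlist gP t).map (gP a)

@[simp] lemma zlist_nil (gP : X → Equiv.Perm X) : zlist gP [] = [] := rfl

@[simp] lemma zlist_cons (gP : X → Equiv.Perm X) (a : X) (t : List X) :
    zlist gP (a :: t) = a :: (zlist gP t).map (gP a) := rfl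

include hS hg hinv hbr hC hyf in
lemma push2 (l : List X) : ∀ a : X,
    a ∈ (zlist (gPerm hg) l).map (gPerm hg a) →
    ∃ l' : List X, PresentedGroup.of a * prodW S g f l = prodW S g f l'
      ∧ l.length = l'.length + 1
      ∧ ((zlist (gPerm hg) l' : Multiset X)
          = ((((zlist (gPerm hg) l).map (gPerm hg a) : List X) : Multiset X)).erase a) := by
  induction l with
  | nil => intro a ha; simp at ha
  | cons b t IH =>
    intro a ha
    by_cases hab : g a b = a
    · -- frozen head: cancel
      have hb : b = yf a := eq_yf_of_g hS hg hyf hab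
      have hid : (zlist (gPerm hg) t).map (⇑(gPerm hg a) ∘ ⇑(gPerm hg b)) = zlist (gPerm hg) t := by
        have : ⇑(gPerm hg a) ∘ ⇑(gPerm hg b) = id := by
          funext v
          simp only [Function.comp_apply, gPerm_apply, id_eq]
          rw [hb]
          exact hC1 hC hyf a v
        rw [this, List.map_id]
      refine ⟨t, ?_, rfl, ?_⟩
      · rw [prodW_cons, ← mul_assoc, hb, frozenW S g f hyf a, one_mul]
      · have hh : (gPerm hg a) b = a := hab
        rw [zlist_cons, List.map_cons, List.map_map, hid, hh, ← Multiset.cons_coe,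
          Multiset.erase_cons_head]
    · -- push into the tail
      set c := g a b with hc
      set d := f b a with hd
      have hgg : ⇑(gPerm hg a) ∘ ⇑(gPerm hg b) = ⇑(gPerm hg c) ∘ ⇑(gPerm hg d) := by
        funext v
        simp only [Function.comp_apply, gPerm_apply]
        exact (B1 hS hbr a b v).symm
      have hcd : g c d = a := I1 hS hinv a b
      have hmem : d ∈ (zlist (gPerm hg) t).map (gPerm hg d) := by
        rw [zlist_cons, List.map_cons, List.map_map] at ha
        rcases List.mem_cons.1 ha with h | h
        · exact absurd h.symm hab
        · rw [hgg] at h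
          rw [← List.map_map] at h
          obtain ⟨u, hu, hgu⟩ := List.mem_map.1 h
          have : u = d := (hg c).1 (by rw [gPerm_apply] at hgu; rw [hgu, hcd])
          rw [this] at hu
          exact hu
      obtain ⟨t', h1, h2, h3⟩ := IH d hmem
      refine ⟨c :: t', ?_, ?_, ?_⟩
      · rw [prodW_cons, prodW_cons, ← mul_assoc, relW S g f a b, ← hc, ← hd, mul_assoc, h1]
      · simp [h2]
      · calc ((zlist (gPerm hg) (c :: t') : List X) : Multiset X)
            = c ::ₘ Multiset.map (⇑(gPerm hg c)) (zlist (gPerm hg) t' : Multiset X) := by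
              rw [zlist_cons, ← Multiset.cons_coe, Multiset.map_coe]
          _ = c ::ₘ Multiset.map (⇑(gPerm hg c))
                ((((zlist (gPerm hg) t).map (gPerm hg d) : List X) : Multiset X).erase d) := by
              rw [h3]
          _ = c ::ₘ (Multiset.map (⇑(gPerm hg c))
                (((zlist (gPerm hg) t).map (gPerm hg d) : List X) : Multiset X)).erase
                  (gPerm hg c d) := by
              exact congrArg (fun M => c ::ₘ M)
                (Multiset.map_erase (⇑(gPerm hg c)) (gPerm hg c).injective d
                  (((zlist (gPerm hg) t).map (gPerm hg d) : List X) : Multiset X))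
          _ = c ::ₘ ((((zlist (gPerm hg) t).map (⇑(gPerm hg c) ∘ ⇑(gPerm hg d)) : List X) :
                Multiset X)).erase a := by
              rw [Multiset.map_coe, List.map_map, gPerm_apply, hcd]
          _ = c ::ₘ ((((zlist (gPerm hg) t).map (⇑(gPerm hg a) ∘ ⇑(gPerm hg b)) : List X) :
                Multiset X)).erase a := by rw [hgg]
          _ = ((((zlist (gPerm hg) (b :: t)).map (gPerm hg a) : List X) : Multiset X)).erase a := by
              rw [zlist_cons, List.map_cons, List.map_map, ← Multiset.cons_coe, gPerm_apply, ← hc,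
                Multiset.erase_cons_tail _ hab]

include hS hg hinv hbr hC hyf in
lemma even_cancel (n : ℕ) : ∀ l : List X, l.length = n →
    (∀ v : X, Even (((zlist (gPerm hg) l : List X) : Multiset X).count v)) →
    prodW S g f l = 1 := by
  induction n using Nat.strong_induction_on with
  | _ n IH =>
    intro l hlen hev
    rcases l with _ | ⟨a, t⟩
    · rfl
    · have hmem : a ∈ (zlist (gPerm hg) t).map (gPerm hg a) := by
        have h := hev a
        rw [zlist_cons, ← Multiset.cons_coe, Multiset.count_cons, if_pos rfl] at h
        have : (((zlist (gPerm hg) t).map (gPerm hg a) : List X) : Multiset X).count a ≠ 0 := by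
          intro h0
          rw [h0] at h
          simp at h
        have := Multiset.count_pos.1 (Nat.pos_of_ne_zero this)
        exact Multiset.mem_coe.1 this
      obtain ⟨l', h1, h2, h3⟩ := push2 hS hg hinv hbr hC hyf t a hmem
      have hev' : ∀ v : X, Even (((zlist (gPerm hg) l' : List X) : Multiset X).count v) := by
        intro v
        rw [h3]
        by_cases hv : v = a
        · subst hv
          rw [Multiset.count_erase_self]
          have h := hev v
          rw [zlist_cons, ← Multiset.cons_coe, Multiset.count_cons, if_pos rfl] at h
          have hodd : ¬ Even ((((zlist (gPerm hg) t).map (gPerm hg v) : List X) :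
              Multiset X).count v) := Nat.even_add_one.1 (by simpa using h)
          rw [Nat.not_even_iff_odd] at hodd
          obtain ⟨k, hk⟩ := hodd
          exact ⟨k, by omega⟩
        · rw [Multiset.count_erase_of_ne hv]
          have h := hev v
          rw [zlist_cons, ← Multiset.cons_coe, Multiset.count_cons, if_neg hv] at h
          simpa using h
      have hlt : l'.length < n := by
        simp only [List.length_cons] at hlen
        omega
      rw [prodW_cons, h1]
      exact IH l'.length hlt l' rfl hev'

variable (S g f) in
include hyf in
lemma exists_word (w : PresentedGroup (quotRels S g f)) : ∃ l : List X, prodW S g f l = w := by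
  set M := Submonoid.closure (Set.range (PresentedGroup.of :
    X → PresentedGroup (quotRels S g f))) with hM
  have hinvM : ∀ u ∈ M, u⁻¹ ∈ M := by
    intro u hu
    induction hu using Submonoid.closure_induction with
    | mem x hx =>
      obtain ⟨x0, rfl⟩ := hx
      rw [inv_ofW S g f hyf x0]
      exact Submonoid.subset_closure ⟨yf x0, rfl⟩
    | one => simpa using Submonoid.one_mem M
    | mul x y hx hy ihx ihy =>
      rw [mul_inv_rev]
      exact Submonoid.mul_mem M ihy ihx
  have hall : w ∈ M := by
    let H : Subgroup (PresentedGroup (quotRels S g f)) :=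
      { toSubmonoid := M, inv_mem' := fun {u} hu => hinvM u hu }
    exact PresentedGroup.generated_by (quotRels S g f) H
      (fun j => Submonoid.subset_closure ⟨j, rfl⟩) w
  obtain ⟨lw, hlw, hprod⟩ := Submonoid.exists_list_of_mem_closure hall
  clear hall hinvM hM
  induction lw generalizing w with
  | nil => exact ⟨[], by rw [← hprod, List.prod_nil]; rfl⟩
  | cons u lu IH =>
    obtain ⟨x0, hx0⟩ := hlw u List.mem_cons_self
    obtain ⟨l0, hl0⟩ := IH lu.prod (fun y hy => hlw y (List.mem_cons_of_mem _ hy)) rfl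
    exact ⟨x0 :: l0, by rw [prodW_cons, hl0, hx0, ← List.prod_cons (a := u), hprod]⟩

include hS hg hinv hbr hC hyf in
lemma psiW_a (l : List X) :
    (psiW hS hg hinv hbr hC hyf (prodW S g f l)).a
      = fun v => ((((zlist (gPerm hg) l : List X) : Multiset X).count v : ZMod 2)) := by
  induction l with
  | nil =>
    funext v
    show (psiW hS hg hinv hbr hC hyf 1).a v = _
    rw [map_one]
    simp
  | cons a t IH =>
    funext v
    rw [prodW_cons, map_mul, psiW_of hS hg hinv hbr hC hyf a]
    show deltaF (ZMod 2) a v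
        + (psiW hS hg hinv hbr hC hyf (prodW S g f t)).a ((gPerm hg a).symm v) = _
    rw [IH]
    rw [zlist_cons, ← Multiset.cons_coe, Multiset.count_cons]
    have hcnt : ((((zlist (gPerm hg) t).map (gPerm hg a) : List X) : Multiset X)).count v
        = (((zlist (gPerm hg) t : List X) : Multiset X)).count ((gPerm hg a).symm v) := by
      have := Multiset.count_map_eq_count' (⇑(gPerm hg a))
        ((zlist (gPerm hg) t : List X) : Multiset X) (gPerm hg a).injective
        ((gPerm hg a).symm v)
      rw [Equiv.apply_symm_apply] at this
      rw [Multiset.map_coe] at this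
      exact this
    rw [hcnt, Nat.cast_add]
    simp only [deltaF]
    rw [add_comm]
    congr 1
    split <;> simp

include hS hg hinv hbr hC hyf in
lemma cW_inj : Function.Injective
    (fun w : PresentedGroup (quotRels S g f) => (psiW hS hg hinv hbr hC hyf w).a) := by
  intro w w' h
  simp only at h
  have hu : (psiW hS hg hinv hbr hC hyf (w⁻¹ * w')).a = 0 := by
    funext v
    rw [map_mul, map_inv]
    simp only [SDP.mul_a, SDP.inv_a, SDP.inv_σ]
    have hv : (Equiv.symm ((psiW hS hg hinv hbr hC hyf w).σ)⁻¹) v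
        = ((psiW hS hg hinv hbr hC hyf w).σ) v := rfl
    rw [hv, h]
    simp
    have : ∀ a : ZMod 2, a + a = 0 := by decide
    exact this _
  obtain ⟨l, hl⟩ := exists_word S g f hyf (w⁻¹ * w')
  have hev : ∀ v : X, Even (((zlist (gPerm hg) l : List X) : Multiset X).count v) := by
    intro v
    have h0 : (fun v => ((((zlist (gPerm hg) l : List X) : Multiset X).count v : ZMod 2)))
        = (0 : X → ZMod 2) := by
      rw [← psiW_a hS hg hinv hbr hC hyf l, hl, hu]
    have h1 := congrFun h0 v
    rw [Pi.zero_apply, ZMod.natCast_eq_zero_iff] at h1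
    obtain ⟨k, hk⟩ := h1
    exact ⟨k, by omega⟩
  have h2 : w⁻¹ * w' = 1 := by
    rw [← hl]
    exact even_cancel hS hg hinv hbr hC hyf l.length l rfl hev
  exact inv_mul_eq_one.1 h2

include hS hg hinv hbr hC hyf in
lemma cW_surj [Fintype X] : Function.Surjective
    (fun w : PresentedGroup (quotRels S g f) => (psiW hS hg hinv hbr hC hyf w).a) := by
  have hfin : ∀ s : Finset X, ∃ w : PresentedGroup (quotRels S g f),
      (psiW hS hg hinv hbr hC hyf w).a = fun v => if v ∈ s then (1 : ZMod 2) else 0 := by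
    intro s
    induction s using Finset.induction_on with
    | empty => exact ⟨1, by rw [map_one]; funext v; simp⟩
    | @insert z s hz ih =>
      obtain ⟨w, hw⟩ := ih
      refine ⟨w * PresentedGroup.of (((psiW hS hg hinv hbr hC hyf w).σ).symm z), ?_⟩
      funext v
      rw [map_mul, psiW_of hS hg hinv hbr hC hyf]
      simp only [SDP.mul_a]
      rw [hw]
      have hδ : deltaF (ZMod 2) (((psiW hS hg hinv hbr hC hyf w).σ).symm z)
          (((psiW hS hg hinv hbr hC hyf w).σ).symm v) = if v = z then 1 else 0 := by
        simp only [deltaF]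
        congr 1
        rw [eq_iff_iff]
        exact ⟨fun hh => ((psiW hS hg hinv hbr hC hyf w).σ).symm.injective hh,
          fun hh => by rw [hh]⟩
      rw [hδ]
      by_cases hvz : v = z
      · subst hvz
        simp [hz, Finset.mem_insert]
      · simp [hvz, Finset.mem_insert]
  intro aim
  obtain ⟨w, hw⟩ := hfin (Finset.univ.filter (fun v => aim v = 1))
  refine ⟨w, ?_⟩
  show (psiW hS hg hinv hbr hC hyf w).a = aim
  rw [hw]
  funext v
  simp only [Finset.mem_filter, Finset.mem_univ, true_and]
  have h2 : ∀ b : ZMod 2, b = 0 ∨ b = 1 := by decide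
  rcases h2 (aim v) with h | h <;> simp [h]

include hS hg hinv hbr hC hyf in
lemma cardW [Fintype X] :
    Nat.card (PresentedGroup (quotRels S g f)) = 2 ^ Fintype.card X := by
  have hbij : Function.Bijective
      (fun w : PresentedGroup (quotRels S g f) => (psiW hS hg hinv hbr hC hyf w).a) :=
    ⟨cW_inj hS hg hinv hbr hC hyf, cW_surj hS hg hinv hbr hC hyf⟩
  rw [Nat.card_eq_of_bijective _ hbij, Nat.card_fun,
    Nat.card_eq_fintype_card (α := ZMod 2), ZMod.card, Nat.card_eq_fintype_card]

end Wfinite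

section Kernel

variable {X : Type*} [DecidableEq X] {S : X × X → X × X} {g f : X → X → X} {yf : X → X}
  (hS : ∀ x y : X, S (x, y) = (g x y, f y x))
  (hg : ∀ x : X, Function.Bijective (g x))
  (hinv : ∀ p : X × X, S (S p) = p)
  (hbr : Braided S)
  (hC : PropertyC S g f)
  (hyf : ∀ x : X, S (x, yf x) = (x, yf x))

variable (S g f) in
/-- The canonical projection `G(X,S) → W(X,S)`. -/
noncomputable def pi0 : PresentedGroup (structGrpRels g f) →* PresentedGroup (quotRels S g f) :=
  PresentedGroup.toGroup (f := PresentedGroup.of) (by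
    rintro r ⟨x, y, rfl⟩
    rw [map_mul, map_mul, map_inv, map_mul, mul_inv_eq_one]
    simp only [FreeGroup.lift_apply_of]
    exact relW S g f x y)

@[simp] lemma pi0_of (x : X) : pi0 S g f (PresentedGroup.of x) = PresentedGroup.of x :=
  PresentedGroup.toGroup.of _

include hS hg hinv hbr hC hyf in
lemma closure_theta_normal [Finite X] :
    (Subgroup.closure (Set.range (th g f yf))).Normal := by
  set H := Subgroup.closure (Set.range (th g f yf)) with hH
  let K : Subgroup (PresentedGroup (structGrpRels g f)) :=
    { carrier := {u | (∀ n ∈ H, u * n * u⁻¹ ∈ H) ∧ (∀ n ∈ H, u⁻¹ * n * u ∈ H)}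
      one_mem' := by
        constructor <;> intro n hn <;> simpa using hn
      mul_mem' := by
        rintro u v ⟨hu1, hu2⟩ ⟨hv1, hv2⟩
        constructor
        · intro n hn
          have h2 := hu1 _ (hv1 n hn)
          have e : u * (v * n * v⁻¹) * u⁻¹ = u * v * n * (u * v)⁻¹ := by group
          rwa [e] at h2
        · intro n hn
          have h2 := hv2 _ (hu2 n hn)
          have e : v⁻¹ * (u⁻¹ * n * u) * v = (u * v)⁻¹ * n * (u * v) := by group
          rwa [e] at h2
      inv_mem' := by
        rintro u ⟨h1, h2⟩
        exact ⟨fun n hn => by simpa using h2 n hn, fun n hn => by simpa using h1 n hn⟩ }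
  have hthm : ∀ z x : X, (PresentedGroup.of z)⁻¹ * th g f yf x * PresentedGroup.of z
      = th g f yf (alphaYB g f yf z x) := by
    intro z x
    have h := theta_push hS hg hbr hC hyf z x
    rw [mul_assoc, h, ← mul_assoc, inv_mul_cancel, one_mul]
  have hthm' : ∀ z x : X, PresentedGroup.of z * th g f yf (alphaYB g f yf z x)
      * (PresentedGroup.of z)⁻¹ = th g f yf x := by
    intro z x
    have h := theta_push hS hg hbr hC hyf z x
    rw [← h, mul_assoc, mul_inv_cancel, mul_one]
  have hgen : ∀ z : X, PresentedGroup.of z ∈ K := by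
    intro z
    constructor
    · intro n hn
      refine Subgroup.closure_induction ?_ ?_ ?_ ?_ hn
      · rintro _ ⟨x, rfl⟩
        obtain ⟨x', hx'⟩ := (alpha_bij hS hg hinv hbr hC hyf z).2 x
        rw [← hx', hthm' z x']
        exact Subgroup.subset_closure ⟨x', rfl⟩
      · simpa using one_mem H
      · intro a b _ _ iha ihb
        have e : PresentedGroup.of z * (a * b) * (PresentedGroup.of z)⁻¹
            = (PresentedGroup.of z * a * (PresentedGroup.of z)⁻¹)
              * (PresentedGroup.of z * b * (PresentedGroup.of z)⁻¹) := by group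
        rw [e]
        exact mul_mem iha ihb
      · intro a _ iha
        have e : PresentedGroup.of z * a⁻¹ * (PresentedGroup.of z)⁻¹
            = (PresentedGroup.of z * a * (PresentedGroup.of z)⁻¹)⁻¹ := by group
        rw [e]
        exact inv_mem iha
    · intro n hn
      refine Subgroup.closure_induction ?_ ?_ ?_ ?_ hn
      · rintro _ ⟨x, rfl⟩
        rw [hthm z x]
        exact Subgroup.subset_closure ⟨alphaYB g f yf z x, rfl⟩
      · simpa using one_mem H
      · intro a b _ _ iha ihb
        have e : (PresentedGroup.of z)⁻¹ * (a * b) * PresentedGroup.of z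
            = ((PresentedGroup.of z)⁻¹ * a * PresentedGroup.of z)
              * ((PresentedGroup.of z)⁻¹ * b * PresentedGroup.of z) := by group
        rw [e]
        exact mul_mem iha ihb
      · intro a _ iha
        have e : (PresentedGroup.of z)⁻¹ * a⁻¹ * PresentedGroup.of z
            = ((PresentedGroup.of z)⁻¹ * a * PresentedGroup.of z)⁻¹ := by group
        rw [e]
        exact inv_mem iha
  have hK : ∀ u : PresentedGroup (structGrpRels g f), u ∈ K := by
    intro u
    have h1 : Subgroup.closure (Set.range (PresentedGroup.of :
        X → PresentedGroup (structGrpRels g f))) ≤ K :=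
      (Subgroup.closure_le K).2 (by rintro _ ⟨z, rfl⟩; exact hgen z)
    apply h1
    rw [PresentedGroup.closure_range_of]
    trivial
  exact ⟨fun n hn gg => (hK gg).1 n hn⟩

include hS hg hinv hbr hC hyf in
lemma ker_eq [Finite X]
    (π : PresentedGroup (structGrpRels g f) →* PresentedGroup (quotRels S g f))
    (hπ : ∀ x : X, π (PresentedGroup.of x) = PresentedGroup.of x) :
    π.ker = Subgroup.closure (Set.range (th g f yf)) := by
  set H := Subgroup.closure (Set.range (th g f yf)) with hH
  haveI hN : H.Normal := closure_theta_normal hS hg hinv hbr hC hyf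
  have hcomp : π.comp (PresentedGroup.mk (structGrpRels g f))
      = PresentedGroup.mk (quotRels S g f) := by
    apply FreeGroup.ext_hom
    intro x
    exact hπ x
  apply le_antisymm
  · intro u hu
    obtain ⟨w, rfl⟩ := PresentedGroup.mk_surjective (structGrpRels g f) u
    have hw' : w ∈ Subgroup.normalClosure (quotRels S g f) := by
      rw [← QuotientGroup.eq_one_iff w]
      have : π.comp (PresentedGroup.mk (structGrpRels g f)) w = 1 := hu
      rwa [hcomp] at this
    have hmem : PresentedGroup.mk (structGrpRels g f) w ∈
        Subgroup.map (PresentedGroup.mk (structGrpRels g f))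
          (Subgroup.normalClosure (quotRels S g f)) := ⟨w, hw', rfl⟩
    rw [Subgroup.map_normalClosure _ _ (PresentedGroup.mk_surjective _)] at hmem
    refine Subgroup.normalClosure_le_normal ?_ hmem
    rintro _ ⟨r, hr, rfl⟩
    rcases hr with ⟨x, y, rfl⟩ | ⟨x, y, hfr, rfl⟩
    · have h1 : PresentedGroup.mk (structGrpRels g f) (FreeGroup.of x * FreeGroup.of y
          * (FreeGroup.of (g x y) * FreeGroup.of (f y x))⁻¹) = 1 := by
        rw [map_mul, map_mul, map_inv, map_mul, mul_inv_eq_one]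
        exact relG g f x y
      rw [h1]
      exact one_mem H
    · obtain rfl := frozen_eq_yf hS hg hyf hfr
      have h1 : PresentedGroup.mk (structGrpRels g f) (FreeGroup.of x * FreeGroup.of (yf x))
          = th g f yf x := by
        rw [map_mul]; rfl
      rw [h1]
      exact Subgroup.subset_closure ⟨x, rfl⟩
  · refine (Subgroup.closure_le _).2 ?_
    rintro _ ⟨x, rfl⟩
    rw [SetLike.mem_coe, MonoidHom.mem_ker, th, map_mul, hπ, hπ]
    exact frozenW S g f hyf x

end Kernel

section Assemble

variable {X : Type*} [DecidableEq X] {S : X × X → X × X} {g f : X → X → X} {yf : X → X}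
  (hS : ∀ x y : X, S (x, y) = (g x y, f y x))
  (hg : ∀ x : X, Function.Bijective (g x))
  (hinv : ∀ p : X × X, S (S p) = p)
  (hbr : Braided S)
  (hC : PropertyC S g f)
  (hyf : ∀ x : X, S (x, yf x) = (x, yf x))

include hS hg hinv hbr hC hyf in
lemma theta_word (l : List (X × Bool)) :
    psiG hS hg hinv hbr
        ((l.map fun p => if p.2 then th g f yf p.1 else (th g f yf p.1)⁻¹).prod)
      = (⟨fun v => 2 * ((l.count (v, true) : ℤ) - (l.count (v, false) : ℤ)), 1⟩ : SDP X ℤ) := by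
  induction l with
  | nil =>
    rw [List.map_nil, List.prod_nil, map_one]
    ext v
    · show (0 : ℤ) = 2 * ((0 : ℤ) - 0)
      ring
    · rfl
  | cons p l IH =>
    rw [List.map_cons, List.prod_cons, map_mul, IH]
    obtain ⟨x, b⟩ := p
    have hfac : psiG hS hg hinv hbr (if b then th g f yf x else (th g f yf x)⁻¹)
        = (⟨fun v => (if b then (2 : ℤ) else -2) * deltaF ℤ x v, 1⟩ : SDP X ℤ) := by
      cases b
      · rw [if_neg (by simp), map_inv, psiG_th hS hg hinv hbr hC hyf x]
        ext v
        · show -(2 * deltaF ℤ x v) = (if (false : Bool) = true then (2:ℤ) else -2) * deltaF ℤ x v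
          rw [if_neg (by simp)]
          ring
        · rfl
      · rw [if_pos rfl, psiG_th hS hg hinv hbr hC hyf x]
        ext v
        · show 2 * deltaF ℤ x v = (if (true : Bool) = true then (2:ℤ) else -2) * deltaF ℤ x v
          rw [if_pos rfl]
        · rfl
    rw [hfac]
    ext v
    · simp only [SDP.mul_a]
      have hσ : ((⟨fun v => (if b then (2 : ℤ) else -2) * deltaF ℤ x v, 1⟩ :
          SDP X ℤ)).σ.symm v = v := rfl
      rw [hσ]
      simp only [deltaF, List.count_cons, beq_iff_eq, Prod.mk.injEq]
      cases b
      · by_cases hvx : v = x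
        · subst hvx
          rw [if_neg (fun h : v = v ∧ (false : Bool) = true => by simpa using h.2),
            if_pos (⟨rfl, rfl⟩ : v = v ∧ (false : Bool) = false), if_pos rfl,
            if_neg (fun h : (false : Bool) = true => by simpa using h)]
          push_cast
          ring
        · rw [if_neg (fun h : x = v ∧ (false : Bool) = true => hvx h.1.symm),
            if_neg (fun h : x = v ∧ (false : Bool) = false => hvx h.1.symm), if_neg hvx,
            if_neg (fun h : (false : Bool) = true => by simpa using h)]
          push_cast
          ring
      · by_cases hvx : v = x
        · subst hvx
          rw [if_pos (⟨rfl, rfl⟩ : v = v ∧ (true : Bool) = true),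
            if_neg (fun h : v = v ∧ (true : Bool) = false => by simpa using h.2), if_pos rfl,
            if_pos rfl]
          push_cast
          ring
        · rw [if_neg (fun h : x = v ∧ (true : Bool) = true => hvx h.1.symm),
            if_neg (fun h : x = v ∧ (true : Bool) = false => hvx h.1.symm), if_neg hvx,
            if_pos rfl]
          push_cast
          ring
    · rfl

end Assemble

/-- under Property (C), with `n = |X|`, the quotient `W(X,S)` of `G(X,S)` by the
relations `xy = 1` for frozen pairs is a finite group of order `2^n`, and the kernel of the
canonical projection `G(X,S) → W(X,S)` is the subgroup generated by the frozen elements, a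
free Abelian group of rank `n` freely generated by them. -/
theorem stmt_19 {X : Type*} [Fintype X] [DecidableEq X]
    (S : X × X → X × X) (g f : X → X → X)
    (hS : ∀ x y : X, S (x, y) = (g x y, f y x))
    (hg : ∀ x : X, Function.Bijective (g x))
    (hf : ∀ x : X, Function.Bijective (f x))
    (hinv : ∀ p : X × X, S (S p) = p)
    (hbr : Braided S)
    (hC : PropertyC S g f)
    (yf : X → X) (hyf : ∀ x : X, S (x, yf x) = (x, yf x)) :
    letI θ : X → PresentedGroup (structGrpRels g f) := fun x =>
      PresentedGroup.of x * PresentedGroup.of (yf x)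
    Nat.card (PresentedGroup (quotRels S g f)) = 2 ^ Fintype.card X ∧
      (∃ π : PresentedGroup (structGrpRels g f) →* PresentedGroup (quotRels S g f),
        ∀ x : X, π (PresentedGroup.of x) = PresentedGroup.of x) ∧
      ∀ π : PresentedGroup (structGrpRels g f) →* PresentedGroup (quotRels S g f),
        (∀ x : X, π (PresentedGroup.of x) = PresentedGroup.of x) →
          π.ker = Subgroup.closure (Set.range θ) ∧
          (∀ x x' : X, Commute (θ x) (θ x')) ∧
          ∀ l l' : List (X × Bool),
            (l.map fun p => if p.2 then θ p.1 else (θ p.1)⁻¹).prod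
                = (l'.map fun p => if p.2 then θ p.1 else (θ p.1)⁻¹).prod →
              ∀ x : X,
                (l.count (x, true) : ℤ) - (l.count (x, false) : ℤ)
                  = (l'.count (x, true) : ℤ) - (l'.count (x, false) : ℤ) := by
  show Nat.card (PresentedGroup (quotRels S g f)) = 2 ^ Fintype.card X ∧
      (∃ π : PresentedGroup (structGrpRels g f) →* PresentedGroup (quotRels S g f),
        ∀ x : X, π (PresentedGroup.of x) = PresentedGroup.of x) ∧
      ∀ π : PresentedGroup (structGrpRels g f) →* PresentedGroup (quotRels S g f),
        (∀ x : X, π (PresentedGroup.of x) = PresentedGroup.of x) →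
          π.ker = Subgroup.closure (Set.range (th g f yf)) ∧
          (∀ x x' : X, Commute (th g f yf x) (th g f yf x')) ∧
          ∀ l l' : List (X × Bool),
            (l.map fun p => if p.2 then th g f yf p.1 else (th g f yf p.1)⁻¹).prod
                = (l'.map fun p => if p.2 then th g f yf p.1 else (th g f yf p.1)⁻¹).prod →
              ∀ x : X,
                (l.count (x, true) : ℤ) - (l.count (x, false) : ℤ)
                  = (l'.count (x, true) : ℤ) - (l'.count (x, false) : ℤ)
  refine ⟨cardW hS hg hinv hbr hC hyf, ⟨pi0 S g f, fun x => pi0_of x⟩, ?_⟩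
  intro π hπ
  refine ⟨ker_eq hS hg hinv hbr hC hyf π hπ, fun x x' => th_comm hS hg hbr hC hyf x x', ?_⟩
  intro l l' hprod x
  have h1 := theta_word hS hg hinv hbr hC hyf l
  have h2 := theta_word hS hg hinv hbr hC hyf l'
  have h3 : (⟨fun v => 2 * ((l.count (v, true) : ℤ) - (l.count (v, false) : ℤ)), 1⟩ : SDP X ℤ)
      = (⟨fun v => 2 * ((l'.count (v, true) : ℤ) - (l'.count (v, false) : ℤ)), 1⟩ : SDP X ℤ) := by
    rw [← h1, ← h2, hprod]
  have h4 := congrFun (congrArg SDP.a h3) x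
  exact mul_left_cancel₀ (by norm_num : (2 : ℤ) ≠ 0) h4
end
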